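/- A sequence (μₙ)_{n∈ℕ} of reals is completely monotone (i.e. for every m ≥ 0, the iterated difference Δ^m μₙ ≥ 0 for all n, where Δtₙ = tₙ − tₙ₊₁) if and only if there exists a finite positive Borel measure ν on [0,1] with μₙ = ∫₀¹ tⁿ ν(dt) for every n ∈ ℕ. -/

import Mathlib

open MeasureTheory Finset Filter Topology

/-- Forward difference operator `(Δt)ₙ = tₙ − tₙ₊₁`. -/
def fdiff (t : ℕ → ℝ) : ℕ → ℝ := fun n => t n - t (n + 1)

noncomputable def hcoef (μ : ℕ → ℝ) (k j : ℕ) : ℝ := (k.choose j : ℝ) * fdiff^[k - j] μ j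

noncomputable def hcdf (μ : ℕ → ℝ) (k : ℕ) : ℝ → ℝ :=
  fun x => ∑ j ∈ range (k + 1), if (j : ℝ) ≤ k * x then hcoef μ k j else 0

noncomputable def hmom (μ : ℕ → ℝ) (k n : ℕ) : ℝ :=
  ∑ j ∈ range (k + 1), hcoef μ k j * ((j : ℝ) / k) ^ n





lemma sumA : ∀ (k : ℕ) (t : ℕ → ℝ) (n : ℕ),
    ∑ j ∈ range (k + 1), (k.choose j : ℝ) * fdiff^[k - j] t (j + n) = t n := by
  intro k
  induction k with
  | zero => intro t n; simp [fdiff]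
  | succ k ih =>
    intro t n
    have key := Finset.sum_choose_succ_mul (fun j e => fdiff^[e] t (j + n)) k
    rw [key]
    have h1 : ∑ i ∈ range (k + 1), (k.choose i : ℝ) * fdiff^[k + 1 - i] t (i + n)
        = ∑ i ∈ range (k + 1), (k.choose i : ℝ) * fdiff^[k - i] (fdiff t) (i + n) := by
      apply Finset.sum_congr rfl
      intro i hi
      have : k + 1 - i = (k - i) + 1 := by
        have := Finset.mem_range.1 hi; omega
      rw [this, Function.iterate_succ_apply]
    have h2 : ∑ i ∈ range (k + 1), (k.choose i : ℝ) * fdiff^[k - i] t (i + 1 + n)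
        = ∑ i ∈ range (k + 1), (k.choose i : ℝ) * fdiff^[k - i] t (i + (n + 1)) := by
      apply Finset.sum_congr rfl; intro i _; ring_nf
    rw [h1, h2, ih (fdiff t) n, ih t (n + 1)]
    simp [fdiff]





-- mass
lemma sum_mass (μ : ℕ → ℝ) (k : ℕ) :
    ∑ j ∈ range (k + 1), hcoef μ k j = μ 0 := by
  have := sumA k μ 0
  simp only [hcoef]
  simpa using this

-- moment identity
lemma moment_id (μ : ℕ → ℝ) {k n : ℕ} (hnk : n ≤ k) :
    ∑ j ∈ range (k + 1), hcoef μ k j * ((j.choose n : ℝ) / (k.choose n))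
      = μ n := by
  simp only [hcoef]
  have hck : (0 : ℝ) < (k.choose n : ℝ) := by
    exact_mod_cast Nat.choose_pos hnk
  have key : ∑ j ∈ range (k + 1), ((k.choose j : ℝ) * (j.choose n : ℝ)) * fdiff^[k - j] μ j
      = (k.choose n : ℝ) * μ n := by
    have hsub : Finset.Ico n (k + 1) ⊆ Finset.range (k + 1) := by
      intro x hx; simp only [Finset.mem_Ico, Finset.mem_range] at *; omega
    rw [← Finset.sum_subset hsub (by
      intro x _ hx
      simp only [Finset.mem_Ico, Finset.mem_range, not_and, not_le] at *
      have : x < n := by by_contra hc; push_neg at hc; omega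
      rw [Nat.choose_eq_zero_of_lt this]; simp)]
    rw [Finset.sum_Ico_eq_sum_range]
    have hrw : ∀ i ∈ range (k + 1 - n), ((k.choose (n + i) : ℝ) * ((n + i).choose n : ℝ))
        * fdiff^[k - (n + i)] μ (n + i)
        = (k.choose n : ℝ) * (((k - n).choose i : ℝ) * fdiff^[(k - n) - i] μ (i + n)) := by
      intro i hi
      have hi' : i ≤ k - n := by have := Finset.mem_range.1 hi; omega
      have h1 : k.choose (n + i) * (n + i).choose n = k.choose n * (k - n).choose (n + i - n) :=
        Nat.choose_mul (by omega)
      have h2 : n + i - n = i := by omega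
      rw [h2] at h1
      have h3 : k - (n + i) = (k - n) - i := by omega
      have h4 : n + i = i + n := by omega
      rw [h3, h4, ← h4]
      have h1' : ((k.choose (n + i) : ℝ)) * ((n + i).choose n : ℝ)
          = (k.choose n : ℝ) * ((k - n).choose i : ℝ) := by exact_mod_cast congrArg (Nat.cast : ℕ → ℝ) h1
      rw [h1']
      ring
    rw [Finset.sum_congr rfl hrw, ← Finset.mul_sum]
    have : k + 1 - n = (k - n) + 1 := by omega
    rw [this, sumA (k - n) μ n]
  calc ∑ j ∈ range (k + 1), ((k.choose j : ℝ) * fdiff^[k - j] μ j) * ((j.choose n : ℝ) / (k.choose n))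
      = (∑ j ∈ range (k + 1), ((k.choose j : ℝ) * (j.choose n : ℝ)) * fdiff^[k - j] μ j) / (k.choose n) := by
        rw [Finset.sum_div]; apply Finset.sum_congr rfl; intro j _; ring
    _ = μ n := by rw [key]; field_simp


-- L4: product difference bound
lemma prod_sub_prod_le (n : ℕ) (u v : ℕ → ℝ)
    (hu : ∀ i ∈ range n, 0 ≤ u i ∧ u i ≤ 1) (hv : ∀ i ∈ range n, 0 ≤ v i ∧ v i ≤ 1) :
    |∏ i ∈ range n, u i - ∏ i ∈ range n, v i| ≤ ∑ i ∈ range n, |u i - v i| := by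
  induction n with
  | zero => simp
  | succ n ih =>
    have hu' : ∀ i ∈ range n, 0 ≤ u i ∧ u i ≤ 1 := fun i hi => hu i (by simp at *; omega)
    have hv' : ∀ i ∈ range n, 0 ≤ v i ∧ v i ≤ 1 := fun i hi => hv i (by simp at *; omega)
    have hn : n ∈ range (n+1) := by simp
    rw [Finset.prod_range_succ, Finset.prod_range_succ, Finset.sum_range_succ]
    have hP : |∏ i ∈ range n, u i| ≤ 1 := by
      rw [abs_of_nonneg (Finset.prod_nonneg fun i hi => (hu' i hi).1)]
      exact Finset.prod_le_one (fun i hi => (hu' i hi).1) (fun i hi => (hu' i hi).2)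
    have hvn : |v n| ≤ 1 := by rw [abs_of_nonneg (hv n hn).1]; exact (hv n hn).2
    calc |(∏ i ∈ range n, u i) * u n - (∏ i ∈ range n, v i) * v n|
        = |(∏ i ∈ range n, u i) * (u n - v n) + ((∏ i ∈ range n, u i) - ∏ i ∈ range n, v i) * v n| := by
          ring_nf
      _ ≤ |(∏ i ∈ range n, u i) * (u n - v n)| + |((∏ i ∈ range n, u i) - ∏ i ∈ range n, v i) * v n| :=
          abs_add_le _ _
      _ ≤ 1 * |u n - v n| + (∑ i ∈ range n, |u i - v i|) * 1 := by
          rw [abs_mul, abs_mul]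
          have := ih hu' hv'
          have h1 : |∏ i ∈ range n, u i| * |u n - v n| ≤ 1 * |u n - v n| :=
            mul_le_mul_of_nonneg_right hP (abs_nonneg _)
          have h2 : |(∏ i ∈ range n, u i) - ∏ i ∈ range n, v i| * |v n|
              ≤ (∑ i ∈ range n, |u i - v i|) * 1 :=
            mul_le_mul this hvn (abs_nonneg _) (Finset.sum_nonneg fun i _ => abs_nonneg _)
          linarith
      _ = (∑ i ∈ range n, |u i - v i|) + |u n - v n| := by ring

-- L8: pow difference
lemma pow_sub_pow_le_aux (n : ℕ) : ∀ x y : ℝ, 0 ≤ x → y ≤ 1 → x ≤ y →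
    y ^ n - x ^ n ≤ n * (y - x) := by
  induction n with
  | zero => intro x y _ _ _; simp
  | succ n ih =>
    intro x y hx hy hxy
    have hx1 : x ≤ 1 := hxy.trans hy
    have hy0 : 0 ≤ y := hx.trans hxy
    have hxn : x ^ n ≤ 1 := pow_le_one₀ hx hx1
    have hyn : y ^ n - x ^ n ≤ n * (y - x) := ih x y hx hy hxy
    have : y ^ (n+1) - x ^ (n+1) = y * (y ^ n - x ^ n) + (y - x) * x ^ n := by ring
    rw [this]
    have h1 : y * (y ^ n - x ^ n) ≤ n * (y - x) := by
      calc y * (y ^ n - x ^ n) ≤ 1 * (y ^ n - x ^ n) := by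
            apply mul_le_mul_of_nonneg_right hy
            have := pow_le_pow_left₀ hx hxy n; linarith
        _ ≤ n * (y - x) := by linarith
    have h2 : (y - x) * x ^ n ≤ (y - x) * 1 := by
      apply mul_le_mul_of_nonneg_left hxn; linarith
    push_cast
    nlinarith

lemma abs_pow_sub_pow_le' {x y : ℝ} (n : ℕ) (hx0 : 0 ≤ x) (hx1 : x ≤ 1) (hy0 : 0 ≤ y)
    (hy1 : y ≤ 1) : |x ^ n - y ^ n| ≤ n * |x - y| := by
  rcases le_total x y with h | h
  · rw [abs_of_nonpos (by have := pow_le_pow_left₀ hx0 h n; linarith),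
      abs_of_nonpos (by linarith)]
    have := pow_sub_pow_le_aux n x y hx0 hy1 h; linarith
  · rw [abs_of_nonneg (by have := pow_le_pow_left₀ hy0 h n; linarith),
      abs_of_nonneg (by linarith)]
    have := pow_sub_pow_le_aux n y x hy0 hx1 h; linarith

-- L9: step sum
lemma sum_step (u : ℕ → ℝ) (m i₀ : ℕ) (h1 : 1 ≤ i₀) (h2 : i₀ ≤ m) (w : ℝ) :
    ∑ i ∈ range m, u i * ((if i₀ ≤ i + 1 then w else 0) - (if i₀ ≤ i then w else 0))
      = u (i₀ - 1) * w := by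
  have : ∀ i ∈ range m, u i * ((if i₀ ≤ i + 1 then w else 0) - (if i₀ ≤ i then w else 0))
      = if i = i₀ - 1 then u i * w else 0 := by
    intro i _
    rcases lt_trichotomy i (i₀ - 1) with h | h | h
    · rw [if_neg (by omega), if_neg (by omega), if_neg (by omega)]; ring
    · rw [if_pos (by omega), if_neg (by omega), if_pos h]; ring
    · rw [if_pos (by omega), if_pos (by omega), if_neg (by omega)]; ring
  rw [Finset.sum_congr rfl this, Finset.sum_ite_eq' (range m) (i₀ - 1) (fun i => u i * w)]
  rw [if_pos (by simp; omega)]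

-- L11: Abel
lemma abel_sum (u e : ℕ → ℝ) (m : ℕ) :
    ∑ i ∈ range m, u i * (e (i + 1) - e i)
      = u m * e m - u 0 * e 0 - ∑ i ∈ range m, (u (i + 1) - u i) * e (i + 1) := by
  have h : ∀ i ∈ range m, u i * (e (i + 1) - e i)
      = (u (i+1) * e (i+1) - u i * e i) - (u (i + 1) - u i) * e (i + 1) := by
    intro i _; ring
  rw [Finset.sum_congr rfl h, Finset.sum_sub_distrib, Finset.sum_range_sub (fun i => u i * e i)]



lemma choose_ratio_eq {n j k : ℕ} (hnj : n ≤ j) (hjk : j ≤ k) :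
    (j.choose n : ℝ) / (k.choose n : ℝ)
      = ∏ i ∈ range n, (((j : ℝ) - i) / ((k : ℝ) - i)) := by
  have hd : ∀ l : ℕ, n ≤ l → ((l.descFactorial n : ℝ)) = ∏ i ∈ range n, ((l : ℝ) - i) := by
    intro l hl
    rw [Nat.descFactorial_eq_prod_range]
    push_cast
    apply Finset.prod_congr rfl
    intro i hi
    have : i < n := Finset.mem_range.1 hi
    rw [Nat.cast_sub (by omega)]
  have h1 : (j.descFactorial n : ℝ) = (n.factorial : ℝ) * (j.choose n : ℝ) := by
    exact_mod_cast congrArg (Nat.cast : ℕ → ℝ) (Nat.descFactorial_eq_factorial_mul_choose j n)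
  have h2 : (k.descFactorial n : ℝ) = (n.factorial : ℝ) * (k.choose n : ℝ) := by
    exact_mod_cast congrArg (Nat.cast : ℕ → ℝ) (Nat.descFactorial_eq_factorial_mul_choose k n)
  have hfac : (n.factorial : ℝ) ≠ 0 := by exact_mod_cast n.factorial_ne_zero
  rw [Finset.prod_div_distrib, ← hd j hnj, ← hd k (hnj.trans hjk), h1, h2,
    mul_div_mul_left _ _ hfac]

lemma per_term_bound {n k : ℕ} (hnk : n < k) {j : ℕ} (hjk : j ≤ k) :
    |((j : ℝ) / k) ^ n - (j.choose n : ℝ) / (k.choose n)|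
      ≤ ((n : ℝ) ^ 2 + n) / ((k : ℝ) - n) := by
  have hk0 : (0 : ℝ) < k := by
    have : 0 < k := by omega
    exact_mod_cast this
  have hkn : (0 : ℝ) < (k : ℝ) - n := by
    have : (n : ℝ) < k := by exact_mod_cast hnk
    linarith
  have hjk' : (j : ℝ) ≤ k := by exact_mod_cast hjk
  have hj0 : (0 : ℝ) ≤ j := by positivity
  rcases le_or_gt n j with hnj | hnj
  · -- j ≥ n : product comparison
    rw [choose_ratio_eq hnj hjk]
    have hjn : (n : ℝ) ≤ j := by exact_mod_cast hnj
    have hpow : ((j : ℝ) / k) ^ n = ∏ _i ∈ range n, ((j : ℝ) / k) := by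
      rw [Finset.prod_const, Finset.card_range]
    rw [hpow]
    have hu : ∀ i ∈ range n, 0 ≤ (j : ℝ) / k ∧ (j : ℝ) / k ≤ 1 := by
      intro i _
      constructor
      · positivity
      · rw [div_le_one hk0]; exact hjk'
    have hfacts : ∀ i ∈ range n, (0 : ℝ) < (k : ℝ) - i := by
      intro i hi
      have : i < n := Finset.mem_range.1 hi
      have : (i : ℝ) < n := by exact_mod_cast this
      linarith
    have hv : ∀ i ∈ range n, 0 ≤ ((j : ℝ) - i) / ((k : ℝ) - i) ∧ ((j : ℝ) - i) / ((k : ℝ) - i) ≤ 1 := by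
      intro i hi
      have hki := hfacts i hi
      have hij : (i : ℝ) ≤ j := by
        have : i < n := Finset.mem_range.1 hi
        have : (i : ℝ) < n := by exact_mod_cast this
        linarith
      constructor
      · apply div_nonneg (by linarith) hki.le
      · rw [div_le_one hki]; linarith
    refine (prod_sub_prod_le n _ _ hu hv).trans ?_
    have hterm : ∀ i ∈ range n, |(j : ℝ) / k - ((j : ℝ) - i) / ((k : ℝ) - i)| ≤ (n : ℝ) / ((k : ℝ) - n) := by
      intro i hi
      have hki := hfacts i hi
      have hin : (i : ℝ) < n := by exact_mod_cast Finset.mem_range.1 hi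
      have heq : (j : ℝ) / k - ((j : ℝ) - i) / ((k : ℝ) - i)
          = (i : ℝ) * ((k : ℝ) - j) / ((k : ℝ) * ((k : ℝ) - i)) := by
        field_simp
        ring
      rw [heq, abs_of_nonneg (by apply div_nonneg _ (by positivity); nlinarith)]
      rw [div_le_div_iff₀ (by positivity) hkn]
      have h1 : (i : ℝ) * ((k : ℝ) - j) ≤ (n : ℝ) * k := by
        have : (i : ℝ) * ((k : ℝ) - j) ≤ (n : ℝ) * ((k : ℝ) - j) := by
          apply mul_le_mul_of_nonneg_right hin.le (by linarith)
        nlinarith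
      have h2 : (i : ℝ) * ((k : ℝ) - j) * ((k : ℝ) - n) ≤ (n : ℝ) * k * ((k : ℝ) - n) :=
        mul_le_mul_of_nonneg_right h1 hkn.le
      have h3 : (n : ℝ) * k * ((k : ℝ) - n) ≤ (n : ℝ) * k * ((k : ℝ) - i) := by
        apply mul_le_mul_of_nonneg_left (by linarith) (by positivity)
      nlinarith
    refine (Finset.sum_le_sum hterm).trans ?_
    rw [Finset.sum_const, Finset.card_range, nsmul_eq_mul,
      show (n : ℝ) * ((n : ℝ) / ((k : ℝ) - n)) = (n : ℝ)^2 / ((k : ℝ) - n) from by ring]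
    rw [div_le_div_iff_of_pos_right hkn]
    nlinarith [sq_nonneg (n : ℝ)]
  · -- j < n
    rw [Nat.choose_eq_zero_of_lt hnj]
    simp only [Nat.cast_zero, zero_div, sub_zero]
    have hn1 : 1 ≤ n := by omega
    have hjk1 : (j : ℝ) / k ≤ 1 := by rw [div_le_one hk0]; exact hjk'
    have h0 : (0 : ℝ) ≤ (j : ℝ) / k := by positivity
    rw [abs_of_nonneg (by positivity)]
    have hle : ((j : ℝ) / k) ^ n ≤ (j : ℝ) / k := pow_le_of_le_one h0 hjk1 (by omega)
    have hjn : (j : ℝ) ≤ n := by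
      have : (j : ℝ) < n := by exact_mod_cast hnj
      linarith
    have : (j : ℝ) / k ≤ (n : ℝ) / ((k : ℝ) - n) := by
      rw [div_le_div_iff₀ hk0 hkn]
      nlinarith
    refine hle.trans (this.trans ?_)
    rw [div_le_div_iff_of_pos_right hkn]
    nlinarith [sq_nonneg (n : ℝ)]






section
variable {μ : ℕ → ℝ}

lemma hcoef_nonneg (hpos : ∀ m n : ℕ, 0 ≤ fdiff^[m] μ n) (k j : ℕ) : 0 ≤ hcoef μ k j :=
  mul_nonneg (by positivity) (hpos _ _)

-- L7
lemma hmom_close (hpos : ∀ m n : ℕ, 0 ≤ fdiff^[m] μ n) {n k : ℕ} (hnk : n < k) :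
    |hmom μ k n - μ n| ≤ μ 0 * (((n : ℝ) ^ 2 + n) / ((k : ℝ) - n)) := by
  rw [hmom, ← moment_id μ hnk.le, ← Finset.sum_sub_distrib]
  refine (Finset.abs_sum_le_sum_abs _ _).trans ?_
  rw [← sum_mass μ k, Finset.sum_mul]
  apply Finset.sum_le_sum
  intro j hj
  rw [← mul_sub, abs_mul, abs_of_nonneg (hcoef_nonneg hpos k j)]
  have hjk : j ≤ k := by have := Finset.mem_range.1 hj; omega
  exact mul_le_mul_of_nonneg_left (per_term_bound hnk hjk) (hcoef_nonneg hpos k j)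

-- L12
lemma hcdf_riemann (hpos : ∀ m n : ℕ, 0 ≤ fdiff^[m] μ n) {k m n : ℕ}
    (hk : 1 ≤ k) (hm : 1 ≤ m) (hn : 1 ≤ n) :
    |(∑ i ∈ range m, ((i : ℝ) / m) ^ n * (hcdf μ k ((i + 1 : ℕ) / m) - hcdf μ k ((i : ℕ) / m)))
      - hmom μ k n| ≤ μ 0 * n / m := by
  have hk0 : (0 : ℝ) < k := by exact_mod_cast hk
  have hm0 : (0 : ℝ) < m := by exact_mod_cast hm
  set u : ℕ → ℝ := fun i => ((i : ℝ) / m) ^ n with hu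
  -- swap sums
  have hswap : (∑ i ∈ range m, u i * (hcdf μ k ((i + 1 : ℕ) / m) - hcdf μ k ((i : ℕ) / m)))
      = ∑ j ∈ range (k + 1), ∑ i ∈ range m,
          u i * ((if (j : ℝ) ≤ k * (((i + 1 : ℕ) : ℝ) / m) then hcoef μ k j else 0)
            - (if (j : ℝ) ≤ k * (((i : ℕ) : ℝ) / m) then hcoef μ k j else 0)) := by
    rw [Finset.sum_comm]
    apply Finset.sum_congr rfl
    intro i _
    rw [hcdf, hcdf, ← Finset.sum_sub_distrib, Finset.mul_sum]
  rw [hswap, hmom, ← Finset.sum_sub_distrib]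
  refine (Finset.abs_sum_le_sum_abs _ _).trans ?_
  have key : ∀ j ∈ range (k + 1),
      |(∑ i ∈ range m,
          u i * ((if (j : ℝ) ≤ k * (((i + 1 : ℕ) : ℝ) / m) then hcoef μ k j else 0)
            - (if (j : ℝ) ≤ k * (((i : ℕ) : ℝ) / m) then hcoef μ k j else 0)))
        - hcoef μ k j * ((j : ℝ) / k) ^ n| ≤ hcoef μ k j * ((n : ℝ) / m) := by
    intro j hj
    have hjk : j ≤ k := by have := Finset.mem_range.1 hj; omega
    rcases Nat.eq_zero_or_pos j with rfl | hj1
    · have : ∀ i ∈ range m, u i * ((if ((0 : ℕ) : ℝ) ≤ k * (((i + 1 : ℕ) : ℝ) / m) then hcoef μ k 0 else 0)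
            - (if ((0 : ℕ) : ℝ) ≤ k * (((i : ℕ) : ℝ) / m) then hcoef μ k 0 else 0)) = 0 := by
        intro i _
        rw [if_pos (by push_cast; positivity), if_pos (by push_cast; positivity)]
        ring
      rw [Finset.sum_congr rfl this, Finset.sum_const_zero]
      rw [Nat.cast_zero, zero_div, zero_pow (by omega : n ≠ 0), mul_zero, sub_zero, abs_zero]
      exact mul_nonneg (hcoef_nonneg hpos k 0) (by positivity)
    · -- j ≥ 1
      set y : ℝ := (j : ℝ) * m / k with hy
      have hy0 : 0 < y := by
        have : (0:ℝ) < j := by exact_mod_cast hj1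
        positivity
      have hym : y ≤ m := by
        rw [hy, div_le_iff₀ hk0]
        have : (j : ℝ) ≤ k := by exact_mod_cast hjk
        nlinarith
      set i₀ := ⌈y⌉₊ with hi₀
      have hi1 : 1 ≤ i₀ := by
        rw [hi₀]
        exact Nat.one_le_ceil_iff.mpr hy0
      have him : i₀ ≤ m := by rw [hi₀]; exact Nat.ceil_le.2 hym
      have hyle : y ≤ i₀ := Nat.le_ceil y
      have hygt : (i₀ : ℝ) - 1 < y := by
        have := Nat.ceil_lt_add_one hy0.le
        linarith
      have hcond : ∀ i : ℕ, ((j : ℝ) ≤ k * ((i : ℝ) / m)) ↔ (i₀ ≤ i) := by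
        intro i
        have h2 : (i₀ ≤ i) ↔ ((j : ℝ) * m ≤ (i : ℝ) * k) := by
          rw [hi₀, Nat.ceil_le, hy, div_le_iff₀ hk0]
        have h3 : ((j : ℝ) ≤ k * ((i : ℝ) / m)) ↔ ((j : ℝ) * m ≤ (i : ℝ) * k) := by
          rw [show (k : ℝ) * ((i : ℝ) / m) = (i : ℝ) * k / m from by ring, le_div_iff₀ hm0]
        rw [h3, h2]
      have hrw : ∀ i ∈ range m,
          u i * ((if (j : ℝ) ≤ k * (((i + 1 : ℕ) : ℝ) / m) then hcoef μ k j else 0)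
            - (if (j : ℝ) ≤ k * (((i : ℕ) : ℝ) / m) then hcoef μ k j else 0))
          = u i * ((if i₀ ≤ i + 1 then hcoef μ k j else 0) - (if i₀ ≤ i then hcoef μ k j else 0)) := by
        intro i _
        congr 1
        rw [if_congr (hcond (i + 1)) rfl rfl, if_congr (hcond i) rfl rfl]
      rw [Finset.sum_congr rfl hrw, sum_step u m i₀ hi1 him (hcoef μ k j)]
      -- now |u (i₀ - 1) * a - a * t^n| ≤ a * (n/m)
      have hx0 : (0:ℝ) ≤ ((i₀ - 1 : ℕ) : ℝ) / m := by positivity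
      have hcast : ((i₀ - 1 : ℕ) : ℝ) = (i₀ : ℝ) - 1 := by
        rw [Nat.cast_sub hi1]; norm_num
      have hx1 : ((i₀ - 1 : ℕ) : ℝ) / m ≤ 1 := by
        rw [div_le_one hm0, hcast]
        have : (i₀ : ℝ) ≤ m := by exact_mod_cast him
        linarith
      have ht0 : (0:ℝ) ≤ (j : ℝ) / k := by positivity
      have ht1 : (j : ℝ) / k ≤ 1 := by
        rw [div_le_one hk0]; exact_mod_cast hjk
      have hdist : |((i₀ - 1 : ℕ) : ℝ) / m - (j : ℝ) / k| ≤ 1 / m := by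
        have hty : (j : ℝ) / k = y / m := by
          rw [hy]; field_simp
        rw [hcast, hty]
        have hle1 : ((i₀ : ℝ) - 1) / m ≤ y / m :=
          (div_le_div_iff_of_pos_right hm0).mpr hygt.le
        have hle2 : y / m ≤ ((i₀ : ℝ) - 1) / m + 1 / m := by
          rw [← add_div]
          exact (div_le_div_iff_of_pos_right hm0).mpr (by linarith)
        rw [abs_sub_comm, abs_of_nonneg (by linarith)]
        linarith
      have hpow := abs_pow_sub_pow_le' (x := ((i₀ - 1 : ℕ) : ℝ) / m) (y := (j : ℝ) / k) n hx0 hx1 ht0 ht1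
      have hueq : u (i₀ - 1) = (((i₀ - 1 : ℕ) : ℝ) / m) ^ n := rfl
      rw [hueq, show (((i₀ - 1 : ℕ) : ℝ) / m) ^ n * hcoef μ k j - hcoef μ k j * ((j : ℝ) / k) ^ n
          = hcoef μ k j * ((((i₀ - 1 : ℕ) : ℝ) / m) ^ n - ((j : ℝ) / k) ^ n) from by ring,
        abs_mul, abs_of_nonneg (hcoef_nonneg hpos k j)]
      apply mul_le_mul_of_nonneg_left _ (hcoef_nonneg hpos k j)
      refine hpow.trans ?_
      rw [div_eq_mul_one_div (n:ℝ) (m:ℝ)]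
      exact mul_le_mul_of_nonneg_left hdist (by positivity)
  refine (Finset.sum_le_sum key).trans ?_
  rw [← Finset.sum_mul, sum_mass μ k, mul_div_assoc]
end






section
variable {μ : ℕ → ℝ}

lemma hcdf_mono (hpos : ∀ m n : ℕ, 0 ≤ fdiff^[m] μ n) (k : ℕ) : Monotone (hcdf μ k) := by
  intro x y hxy
  apply Finset.sum_le_sum
  intro j _
  by_cases h : (j : ℝ) ≤ k * x
  · rw [if_pos h, if_pos (h.trans (by
      apply mul_le_mul_of_nonneg_left hxy (by positivity)))]
  · rw [if_neg h]
    by_cases h' : (j : ℝ) ≤ k * y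
    · rw [if_pos h']; exact hcoef_nonneg hpos k j
    · rw [if_neg h']

lemma hcdf_nonneg (hpos : ∀ m n : ℕ, 0 ≤ fdiff^[m] μ n) (k : ℕ) (x : ℝ) :
    0 ≤ hcdf μ k x := by
  apply Finset.sum_nonneg
  intro j _
  by_cases h : (j : ℝ) ≤ k * x
  · rw [if_pos h]; exact hcoef_nonneg hpos k j
  · rw [if_neg h]

lemma hcdf_of_neg {k : ℕ} (hk : 1 ≤ k) {x : ℝ} (hx : x < 0) : hcdf μ k x = 0 := by
  apply Finset.sum_eq_zero
  intro j _
  rw [if_neg]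
  push_neg
  have hk0 : (0:ℝ) < k := by exact_mod_cast hk
  calc (k : ℝ) * x < 0 := by exact mul_neg_of_pos_of_neg hk0 hx
    _ ≤ j := by positivity

lemma hcdf_of_ge_one {k : ℕ} {x : ℝ} (hx : 1 ≤ x) : hcdf μ k x = μ 0 := by
  rw [← sum_mass μ k]
  apply Finset.sum_congr rfl
  intro j hj
  rw [if_pos]
  have hjk : (j:ℝ) ≤ k := by
    have := Finset.mem_range.1 hj
    exact_mod_cast Nat.lt_succ_iff.1 this
  calc (j : ℝ) ≤ k := hjk
    _ = k * 1 := by ring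
    _ ≤ k * x := by apply mul_le_mul_of_nonneg_left hx (by positivity)

lemma hcdf_le (hpos : ∀ m n : ℕ, 0 ≤ fdiff^[m] μ n) (k : ℕ) (x : ℝ) :
    hcdf μ k x ≤ μ 0 := by
  rcases le_or_gt 1 x with h | h
  · rw [hcdf_of_ge_one h]
  · calc hcdf μ k x ≤ hcdf μ k 1 := hcdf_mono hpos k h.le
      _ = μ 0 := hcdf_of_ge_one le_rfl
end

-- Easy direction
lemma easy_dir {μ : ℕ → ℝ} (ν : Measure ℝ) (hfin : IsFiniteMeasure ν)
    (hsupp : ν (Set.Icc (0 : ℝ) 1)ᶜ = 0)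
    (hmom : ∀ n : ℕ, μ n = ∫ t in Set.Icc (0 : ℝ) 1, t ^ n ∂ν) :
    ∀ m n : ℕ, 0 ≤ fdiff^[m] μ n := by
  have hint : ∀ (g : ℝ → ℝ), Continuous g → IntegrableOn g (Set.Icc (0:ℝ) 1) ν := by
    intro g hg
    exact (hg.continuousOn).integrableOn_compact isCompact_Icc
  have key : ∀ m n : ℕ, fdiff^[m] μ n = ∫ t in Set.Icc (0:ℝ) 1, t ^ n * (1 - t) ^ m ∂ν := by
    intro m
    induction m with
    | zero => intro n; simpa using hmom n
    | succ m ih =>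
      intro n
      rw [Function.iterate_succ_apply']
      show fdiff (fdiff^[m] μ) n = _
      rw [fdiff]
      simp only [ih n, ih (n + 1)]
      rw [← integral_sub (hint _ (by continuity)) (hint _ (by continuity))]
      apply setIntegral_congr_fun (by measurability)
      intro t _
      simp only
      ring
  intro m n
  rw [key m n]
  apply setIntegral_nonneg (by measurability)
  intro t ht
  have h0 : 0 ≤ t := ht.1
  have h1 : (0:ℝ) ≤ 1 - t := by linarith [ht.2]
  exact mul_nonneg (pow_nonneg h0 n) (pow_nonneg h1 m)



lemma grid_decomp {m : ℕ} (hm : 1 ≤ m) :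
    Set.Ioc (0:ℝ) 1 = ⋃ i ∈ Finset.range m, Set.Ioc (((i:ℕ):ℝ)/m) (((i+1:ℕ):ℝ)/m) := by
  have hm0 : (0:ℝ) < m := by exact_mod_cast hm
  ext t
  simp only [Set.mem_Ioc, Set.mem_iUnion, Finset.mem_range, exists_prop]
  constructor
  · rintro ⟨ht0, ht1⟩
    set y := t * m with hy
    have hy0 : 0 < y := by positivity
    have hym : y ≤ m := by
      rw [hy]
      nlinarith
    set i₀ := ⌈y⌉₊ with hi₀
    have hi1 : 1 ≤ i₀ := Nat.one_le_ceil_iff.mpr hy0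
    have him : i₀ ≤ m := Nat.ceil_le.2 hym
    have hyle : y ≤ i₀ := Nat.le_ceil y
    have hygt : (i₀ : ℝ) - 1 < y := by
      have := Nat.ceil_lt_add_one hy0.le
      linarith
    refine ⟨i₀ - 1, by omega, ?_, ?_⟩
    · rw [div_lt_iff₀ hm0]
      rw [Nat.cast_sub hi1]
      push_cast
      linarith
    · rw [le_div_iff₀ hm0]
      have : (i₀ - 1 : ℕ) + 1 = i₀ := by omega
      rw [this]
      linarith
  · rintro ⟨i, him, hti, hti'⟩
    constructor
    · have h0 : (0:ℝ) ≤ ((i:ℕ):ℝ)/m := by positivity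
      linarith
    · have : (((i+1:ℕ)):ℝ)/m ≤ 1 := by
        rw [div_le_one hm0]
        exact_mod_cast him
      linarith

lemma grid_disjoint {m : ℕ} : (↑(Finset.range m) : Set ℕ).PairwiseDisjoint
    (fun i : ℕ => Set.Ioc (((i:ℕ):ℝ)/m) (((i+1:ℕ):ℝ)/m)) := by
  intro i hi j hj hij
  have hm0 : (0:ℝ) < m := by
    have : i < m := by simpa using hi
    have : 1 ≤ m := by omega
    exact_mod_cast this
  have key : ∀ a b : ℕ, a < b →
      min (((a+1:ℕ):ℝ)/m) (((b+1:ℕ):ℝ)/m) ≤ max (((a:ℕ):ℝ)/m) (((b:ℕ):ℝ)/m) := by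
    intro a b hab
    refine (min_le_left _ _).trans (le_trans ?_ (le_max_right _ _))
    apply (div_le_div_iff_of_pos_right hm0).mpr
    exact_mod_cast hab
  apply Set.Ioc_disjoint_Ioc.2
  rcases lt_or_gt_of_ne hij with h | h
  · exact key i j h
  · rw [min_comm, max_comm]
    exact key j i h

lemma riemann_est (ν : Measure ℝ) [IsFiniteMeasure ν] {n m : ℕ} (hn : 1 ≤ n) (hm : 1 ≤ m) :
    |(∫ t in Set.Icc (0:ℝ) 1, t ^ n ∂ν)
        - ∑ i ∈ range m, (((i:ℕ):ℝ)/m) ^ n * (ν (Set.Ioc (((i:ℕ):ℝ)/m) (((i+1:ℕ):ℝ)/m))).toReal|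
      ≤ ((n:ℝ)/m) * (ν (Set.Ioc (0:ℝ) 1)).toReal := by
  have hm0 : (0:ℝ) < m := by exact_mod_cast hm
  have hIcc : IntegrableOn (fun t : ℝ => t ^ n) (Set.Icc (0:ℝ) 1) ν :=
    (continuous_pow n).continuousOn.integrableOn_compact isCompact_Icc
  have hIoc : IntegrableOn (fun t : ℝ => t ^ n) (Set.Ioc (0:ℝ) 1) ν :=
    hIcc.mono_set Set.Ioc_subset_Icc_self
  -- split off {0}
  have hsplit : (∫ t in Set.Icc (0:ℝ) 1, t ^ n ∂ν) = ∫ t in Set.Ioc (0:ℝ) 1, t ^ n ∂ν := by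
    have hset : Set.Icc (0:ℝ) 1 = {0} ∪ Set.Ioc (0:ℝ) 1 := by
      ext t
      simp only [Set.mem_Icc, Set.mem_union, Set.mem_singleton_iff, Set.mem_Ioc]
      constructor
      · rintro ⟨h0, h1⟩
        rcases eq_or_lt_of_le h0 with h | h
        · exact Or.inl h.symm
        · exact Or.inr ⟨h, h1⟩
      · rintro (rfl | ⟨h0, h1⟩)
        · norm_num
        · exact ⟨h0.le, h1⟩
    rw [hset, setIntegral_union (by simp) measurableSet_Ioc
      (hIcc.mono_set (by rw [hset]; exact Set.subset_union_left)) hIoc]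
    have : (∫ t in ({0} : Set ℝ), t ^ n ∂ν) = ∫ t in ({0} : Set ℝ), (0:ℝ) ∂ν := by
      apply setIntegral_congr_fun (measurableSet_singleton 0)
      intro t ht
      rw [Set.mem_singleton_iff] at ht
      simp only [ht, zero_pow (by omega : n ≠ 0)]
    rw [this, integral_zero, zero_add]
  -- decompose into pieces
  set I : ℕ → Set ℝ := fun i => Set.Ioc (((i:ℕ):ℝ)/m) (((i+1:ℕ):ℝ)/m) with hI
  have hpiece : (∫ t in Set.Ioc (0:ℝ) 1, t ^ n ∂ν) = ∑ i ∈ range m, ∫ t in I i, t ^ n ∂ν := by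
    rw [grid_decomp hm]
    refine integral_biUnion_finset (range m) (fun i _ => measurableSet_Ioc)
      grid_disjoint (fun i hi => hIoc.mono_set ?_)
    rw [grid_decomp hm]
    intro x hx
    exact Set.mem_biUnion hi hx
  -- bounds on each piece
  have hsub : ∀ i, i ∈ range m → I i ⊆ Set.Ioc (0:ℝ) 1 := by
    intro i hi
    rw [grid_decomp hm]
    intro x hx
    exact Set.mem_biUnion hi hx
  have hmeas_ne : ∀ i, ν (I i) ≠ ⊤ := fun i => measure_ne_top ν _
  set w : ℕ → ℝ := fun i => (ν (I i)).toReal with hw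
  have hw0 : ∀ i, 0 ≤ w i := fun i => ENNReal.toReal_nonneg
  have hup : ∀ i ∈ range m, ∫ t in I i, t ^ n ∂ν ≤ (((i+1:ℕ):ℝ)/m) ^ n * w i := by
    intro i hi
    have : ∫ t in I i, t ^ n ∂ν ≤ ∫ _t in I i, (((i+1:ℕ):ℝ)/m) ^ n ∂ν := by
      apply setIntegral_mono_on (hIoc.mono_set (hsub i hi)) (integrableOn_const (measure_ne_top ν _)) measurableSet_Ioc
      intro t ht
      apply pow_le_pow_left₀ ?_ ht.2 n
      have h0 : (0:ℝ) ≤ ((i:ℕ):ℝ)/m := by positivity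
      linarith [ht.1]
    rw [setIntegral_const] at this
    rw [smul_eq_mul, mul_comm] at this
    exact this
  have hlo : ∀ i ∈ range m, (((i:ℕ):ℝ)/m) ^ n * w i ≤ ∫ t in I i, t ^ n ∂ν := by
    intro i hi
    have : ∫ _t in I i, (((i:ℕ):ℝ)/m) ^ n ∂ν ≤ ∫ t in I i, t ^ n ∂ν := by
      apply setIntegral_mono_on (integrableOn_const (measure_ne_top ν _)) (hIoc.mono_set (hsub i hi)) measurableSet_Ioc
      intro t ht
      apply pow_le_pow_left₀ (by positivity) ht.1.le n
    rw [setIntegral_const, smul_eq_mul, mul_comm] at this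
    exact this
  have hwsum : ∑ i ∈ range m, w i = (ν (Set.Ioc (0:ℝ) 1)).toReal := by
    rw [grid_decomp hm, measure_biUnion_finset grid_disjoint (fun i _ => measurableSet_Ioc)]
    rw [ENNReal.toReal_sum (fun i _ => hmeas_ne i)]
  have hstep : ∀ i ∈ range m, (((i+1:ℕ):ℝ)/m) ^ n - (((i:ℕ):ℝ)/m) ^ n ≤ (n:ℝ)/m := by
    intro i hi
    have him : i + 1 ≤ m := by simpa using Finset.mem_range.1 hi
    have h1 : ((i+1:ℕ):ℝ)/m ≤ 1 := by
      rw [div_le_one hm0]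
      exact_mod_cast him
    have h2 : ((i:ℕ):ℝ)/m ≤ ((i+1:ℕ):ℝ)/m := by
      apply (div_le_div_iff_of_pos_right hm0).mpr
      push_cast
      linarith
    have := pow_sub_pow_le_aux n (((i:ℕ):ℝ)/m) (((i+1:ℕ):ℝ)/m) (by positivity) h1 h2
    have heq : ((i+1:ℕ):ℝ)/m - ((i:ℕ):ℝ)/m = 1/m := by
      push_cast
      field_simp
      ring
    rw [heq] at this
    calc (((i+1:ℕ):ℝ)/m) ^ n - (((i:ℕ):ℝ)/m) ^ n ≤ (n:ℝ) * (1/m) := this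
      _ = (n:ℝ)/m := by ring
  rw [hsplit, hpiece]
  rw [abs_sub_le_iff]
  constructor
  · rw [← Finset.sum_sub_distrib]
    calc ∑ i ∈ range m, ((∫ t in I i, t ^ n ∂ν) - (((i:ℕ):ℝ)/m) ^ n * w i)
        ≤ ∑ i ∈ range m, ((n:ℝ)/m) * w i := by
          apply Finset.sum_le_sum
          intro i hi
          have := hup i hi
          have h2 := hstep i hi
          have h3 := hw0 i
          nlinarith [hlo i hi]
      _ = ((n:ℝ)/m) * (ν (Set.Ioc (0:ℝ) 1)).toReal := by
          rw [← Finset.mul_sum, hwsum]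
  · rw [← Finset.sum_sub_distrib]
    calc ∑ i ∈ range m, ((((i:ℕ):ℝ)/m) ^ n * w i - ∫ t in I i, t ^ n ∂ν)
        ≤ ∑ i ∈ range m, ((n:ℝ)/m) * w i := by
          apply Finset.sum_le_sum
          intro i hi
          have := hlo i hi
          have h3 := hw0 i
          have hnm : (0:ℝ) ≤ (n:ℝ)/m := by positivity
          nlinarith
      _ = ((n:ℝ)/m) * (ν (Set.Ioc (0:ℝ) 1)).toReal := by
          rw [← Finset.mul_sum, hwsum]







section
variable {μ : ℕ → ℝ}
end

set_option maxHeartbeats 1000000 in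
theorem hard_dir {μ : ℕ → ℝ} (hpos : ∀ m n : ℕ, 0 ≤ fdiff^[m] μ n) :
    ∃ ν : Measure ℝ, IsFiniteMeasure ν ∧ ν (Set.Icc (0 : ℝ) 1)ᶜ = 0 ∧
        ∀ n : ℕ, μ n = ∫ t in Set.Icc (0 : ℝ) 1, t ^ n ∂ν := by
  have hc0 : 0 ≤ μ 0 := hpos 0 0
  set F : ℕ → ℝ → ℝ := fun k => hcdf μ k with hF
  have hKcomp : IsCompact (Set.pi Set.univ (fun _ : ℝ => Set.Icc (0:ℝ) (μ 0))) :=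
    isCompact_univ_pi (fun _ => isCompact_Icc)
  have hmaple : Filter.map F Filter.atTop ≤ 𝓟 (Set.pi Set.univ fun _ : ℝ => Set.Icc (0:ℝ) (μ 0)) := by
    rw [Filter.le_principal_iff, Filter.mem_map]
    apply Filter.Eventually.of_forall
    intro k x _
    exact ⟨hcdf_nonneg hpos k x, hcdf_le hpos k x⟩
  obtain ⟨G, hGK, hGcl⟩ := hKcomp.exists_clusterPt hmaple
  have hGmem : ∀ x : ℝ, 0 ≤ G x ∧ G x ≤ μ 0 := by
    intro x
    have := hGK x (Set.mem_univ x)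
    exact ⟨this.1, this.2⟩
  -- closed conditions
  have hGC : Monotone G ∧ (∀ x : ℝ, x < 0 → G x = 0) ∧ (∀ x : ℝ, 1 ≤ x → G x = μ 0) := by
    set C : Set (ℝ → ℝ) := {g | Monotone g} ∩
      ({g | ∀ x : ℝ, x < 0 → g x = 0} ∩ {g | ∀ x : ℝ, 1 ≤ x → g x = μ 0}) with hCdef
    have hCclosed : IsClosed C := by
      apply IsClosed.inter
      · have : {g : ℝ → ℝ | Monotone g}
            = ⋂ (p : ℝ × ℝ) (_ : p.1 ≤ p.2), {g : ℝ → ℝ | g p.1 ≤ g p.2} := by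
          ext g
          constructor
          · intro hg
            exact Set.mem_iInter.2 fun p => Set.mem_iInter.2 fun hp => hg hp
          · intro hg a b hab
            exact Set.mem_iInter.1 (Set.mem_iInter.1 hg (a, b)) hab
        rw [this]
        exact isClosed_iInter fun p => isClosed_iInter fun _ =>
          isClosed_le (continuous_apply p.1) (continuous_apply p.2)
      apply IsClosed.inter
      · have : {g : ℝ → ℝ | ∀ x : ℝ, x < 0 → g x = 0}
            = ⋂ (x : ℝ) (_ : x < 0), {g : ℝ → ℝ | g x = 0} := by
          ext g; simp
        rw [this]
        exact isClosed_iInter fun x => isClosed_iInter fun _ =>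
          isClosed_eq (continuous_apply x) continuous_const
      · have : {g : ℝ → ℝ | ∀ x : ℝ, 1 ≤ x → g x = μ 0}
            = ⋂ (x : ℝ) (_ : 1 ≤ x), {g : ℝ → ℝ | g x = μ 0} := by
          ext g; simp
        rw [this]
        exact isClosed_iInter fun x => isClosed_iInter fun _ =>
          isClosed_eq (continuous_apply x) continuous_const
    have hsub : F '' (Set.Ici 1) ⊆ C := by
      rintro g ⟨k, hk, rfl⟩
      exact ⟨hcdf_mono hpos k, fun x hx => hcdf_of_neg hk hx, fun x hx => hcdf_of_ge_one hx⟩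
    have hGmemC : G ∈ C := by
      apply closure_minimal hsub hCclosed
      rw [mem_closure_iff_clusterPt]
      apply hGcl.mono
      rw [Filter.le_principal_iff, Filter.mem_map]
      filter_upwards [Filter.eventually_ge_atTop 1] with k hk
      exact Set.mem_image_of_mem F hk
    exact ⟨hGmemC.1, hGmemC.2.1, hGmemC.2.2⟩
  obtain ⟨hGmono, hG0, hG1⟩ := hGC
  set SF := hGmono.stieltjesFunction with hSFdef
  have hSFge : ∀ x : ℝ, G x ≤ SF x := fun x => hGmono.le_rightLim le_rfl
  have hSFle : ∀ x y : ℝ, x < y → SF x ≤ G y := fun x y h => hGmono.rightLim_le h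
  have hSF0 : ∀ x : ℝ, x < 0 → SF x = 0 := by
    intro x hx
    have h1 : SF x ≤ G (x/2) := hSFle x (x/2) (by linarith)
    rw [hG0 (x/2) (by linarith)] at h1
    have h2 : (0:ℝ) ≤ SF x := by
      have := hSFge x
      rw [hG0 x hx] at this
      linarith
    linarith
  have hSF1 : ∀ x : ℝ, 1 ≤ x → SF x = μ 0 := by
    intro x hx
    have h1 : SF x ≤ G (x+1) := hSFle x (x+1) (by linarith)
    rw [hG1 (x+1) (by linarith)] at h1
    have h2 : μ 0 ≤ SF x := by
      have := hSFge x
      rw [hG1 x hx] at this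
      linarith
    linarith
  have hbot : Filter.Tendsto SF Filter.atBot (𝓝 0) := by
    apply Filter.Tendsto.congr' _ tendsto_const_nhds
    filter_upwards [Filter.eventually_lt_atBot 0] with x hx
    exact (hSF0 x hx).symm
  have htop : Filter.Tendsto SF Filter.atTop (𝓝 (μ 0)) := by
    apply Filter.Tendsto.congr' _ tendsto_const_nhds
    filter_upwards [Filter.eventually_ge_atTop 1] with x hx
    exact (hSF1 x hx).symm
  have hIio : SF.measure (Set.Iio 0) = 0 := by
    have hcov : Set.Iio (0:ℝ) ⊆ ⋃ (j : ℕ), Set.Iic (-(1/((j:ℝ)+1))) := by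
      intro x hx
      rw [Set.mem_Iio] at hx
      obtain ⟨j, hj⟩ := exists_nat_one_div_lt (show (0:ℝ) < -x by linarith)
      exact Set.mem_iUnion.2 ⟨j, Set.mem_Iic.2 (by push_cast at hj ⊢; linarith)⟩
    apply measure_mono_null hcov
    apply measure_iUnion_null
    intro j
    rw [SF.measure_Iic hbot]
    have hneg : -(1/((j:ℝ)+1)) < 0 := by
      have : (0:ℝ) < 1/((j:ℝ)+1) := by positivity
      linarith
    rw [hSF0 _ hneg]
    simp
  have hIoi : SF.measure (Set.Ioi 1) = 0 := by
    have hcov : Set.Ioi (1:ℝ) ⊆ ⋃ (j : ℕ), Set.Ioc (1:ℝ) (2 + j) := by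
      intro x hx
      rw [Set.mem_Ioi] at hx
      obtain ⟨j, hj⟩ := exists_nat_ge x
      exact Set.mem_iUnion.2 ⟨j, Set.mem_Ioc.2 ⟨hx, by push_cast; linarith⟩⟩
    apply measure_mono_null hcov
    apply measure_iUnion_null
    intro j
    rw [SF.measure_Ioc]
    rw [hSF1 1 le_rfl, hSF1 (2 + j) (by push_cast; linarith [Nat.cast_nonneg (α := ℝ) j])]
    simp
  have hnull : SF.measure (Set.Icc (0:ℝ) 1)ᶜ = 0 := by
    have hsub : (Set.Icc (0:ℝ) 1)ᶜ ⊆ Set.Iio 0 ∪ Set.Ioi 1 := by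
      intro x hx
      simp only [Set.mem_compl_iff, Set.mem_Icc, not_and, not_le] at hx
      rcases lt_or_ge x 0 with h | h
      · exact Or.inl h
      · exact Or.inr (hx h)
    exact measure_mono_null hsub (measure_union_null hIio hIoi)
  have hmicc : SF.measure (Set.Icc (0:ℝ) 1) = ENNReal.ofReal (μ 0) := by
    have huniv : SF.measure Set.univ = ENNReal.ofReal (μ 0) := by
      rw [SF.measure_univ hbot htop]
      norm_num
    have hadd := measure_add_measure_compl (μ := SF.measure) (measurableSet_Icc (a := (0:ℝ)) (b := 1))
    rw [hnull, add_zero] at hadd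
    rw [hadd, huniv]
  have hmtoReal : (SF.measure (Set.Icc (0:ℝ) 1)).toReal = μ 0 := by
    rw [hmicc, ENNReal.toReal_ofReal hc0]
  haveI hfinm : IsFiniteMeasure SF.measure := SF.isFiniteMeasure hbot htop
  refine ⟨SF.measure, SF.isFiniteMeasure hbot htop, hnull, ?_⟩
  intro n
  rcases Nat.eq_zero_or_pos n with rfl | hn1
  · simp only [pow_zero]
    rw [setIntegral_const, measureReal_def, hmtoReal, smul_eq_mul, mul_one]
  -- main case n ≥ 1
  apply eq_of_forall_dist_le
  intro ε hε
  set m : ℕ := max 1 ⌈6 * μ 0 * n / ε⌉₊ with hmdef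
  have hm1 : 1 ≤ m := le_max_left _ _
  have hm0 : (0:ℝ) < m := by exact_mod_cast hm1
  have hmge : 6 * μ 0 * n / ε ≤ m := by
    refine (Nat.le_ceil _).trans ?_
    exact_mod_cast le_max_right 1 _
  have h6 : 6 * μ 0 * n ≤ ε * m := by
    rw [div_le_iff₀ hε] at hmge
    linarith
  have hmain : 3 * (μ 0 * n / m) ≤ ε / 2 := by
    rw [show 3 * (μ 0 * (n:ℝ) / m) = (3 * (μ 0 * n)) / m from by ring, div_le_iff₀ hm0]
    nlinarith
  set K₀ : ℕ := n + 1 + ⌈4 * μ 0 * ((n:ℝ)^2 + n) / ε⌉₊ with hK₀def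
  have hKbound : ∀ k : ℕ, K₀ ≤ k → μ 0 * (((n:ℝ)^2 + n)/((k:ℝ) - n)) ≤ ε / 4 := by
    intro k hk
    have hceil : 4 * μ 0 * ((n:ℝ)^2 + n) / ε ≤ (⌈4 * μ 0 * ((n:ℝ)^2 + n) / ε⌉₊ : ℝ) :=
      Nat.le_ceil _
    have hkk : (K₀:ℝ) ≤ (k:ℝ) := by exact_mod_cast hk
    have hKval : (K₀:ℝ) = (n:ℝ) + 1 + (⌈4 * μ 0 * ((n:ℝ)^2 + n) / ε⌉₊ : ℝ) := by
      rw [hK₀def]; push_cast; ring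
    have hkn : (k:ℝ) - n ≥ 1 + (⌈4 * μ 0 * ((n:ℝ)^2 + n) / ε⌉₊ : ℝ) := by
      rw [hKval] at hkk; linarith
    have hXnn : 0 ≤ 4 * μ 0 * ((n:ℝ)^2 + n) := by positivity
    have hpos' : (0:ℝ) < (k:ℝ) - n := by
      have : (0:ℝ) ≤ (⌈4 * μ 0 * ((n:ℝ)^2 + n) / ε⌉₊ : ℝ) := by positivity
      linarith
    rw [show μ 0 * (((n:ℝ)^2 + n)/((k:ℝ) - n)) = (μ 0 * ((n:ℝ)^2 + n))/((k:ℝ) - n) from by ring,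
      div_le_iff₀ hpos']
    have h1 : ε * ((k:ℝ) - n) ≥ ε * (1 + (⌈4 * μ 0 * ((n:ℝ)^2 + n) / ε⌉₊ : ℝ)) :=
      mul_le_mul_of_nonneg_left hkn hε.le
    have h2 : ε * (⌈4 * μ 0 * ((n:ℝ)^2 + n) / ε⌉₊ : ℝ) ≥ 4 * μ 0 * ((n:ℝ)^2 + n) := by
      rw [ge_iff_le, ← div_le_iff₀' hε]
      exact hceil
    nlinarith
  set η := ε / (8 * ((m:ℝ) + 1)) with hηdef
  have hη0 : 0 < η := by positivity
  set U : Set (ℝ → ℝ) :=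
    ⋂ i ∈ Finset.range (m + 2), {g : ℝ → ℝ | |g ((i:ℝ)/m) - G ((i:ℝ)/m)| < η} with hUdef
  have hUopen : IsOpen U := by
    apply isOpen_biInter_finset
    intro i _
    have heq : {g : ℝ → ℝ | |g ((i:ℝ)/m) - G ((i:ℝ)/m)| < η}
        = (fun g : ℝ → ℝ => g ((i:ℝ)/m)) ⁻¹' (Metric.ball (G ((i:ℝ)/m)) η) := by
      ext g
      simp [Metric.mem_ball, Real.dist_eq]
    rw [heq]
    exact (continuous_apply _).isOpen_preimage _ Metric.isOpen_ball
  have hUmem : U ∈ 𝓝 G := by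
    apply hUopen.mem_nhds
    rw [hUdef]
    apply Set.mem_iInter₂.2
    intro i _
    simpa using hη0
  have hfreq : ∃ᶠ k in Filter.atTop, F k ∈ U :=
    (mapClusterPt_iff_frequently.1 (show MapClusterPt G Filter.atTop F from hGcl)) U hUmem
  obtain ⟨k, hkU, hkK⟩ := (hfreq.and_eventually (Filter.eventually_ge_atTop K₀)).exists
  have hk1 : 1 ≤ k := by omega
  have hnk : n < k := by omega
  have hclose : ∀ i ∈ Finset.range (m + 2), |F k ((i:ℝ)/m) - G ((i:ℝ)/m)| < η :=
    fun i hi => Set.mem_iInter₂.1 hkU i hi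
  -- sequences
  set u : ℕ → ℝ := fun i => ((i:ℝ)/m)^n with hu
  set A : ℕ → ℝ := fun i => SF ((i:ℝ)/m) with hA
  set B : ℕ → ℝ := fun i => G ((i:ℝ)/m) with hB
  set Fk : ℕ → ℝ := fun i => F k ((i:ℝ)/m) with hFk
  have hgrid_mono : ∀ i : ℕ, ((i:ℝ)/m) ≤ ((i+1:ℕ):ℝ)/m := by
    intro i
    apply (div_le_div_iff_of_pos_right hm0).mpr
    push_cast
    linarith
  have hgrid_lt : ∀ i : ℕ, ((i:ℝ)/m) < ((i+1:ℕ):ℝ)/m := by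
    intro i
    rw [div_lt_div_iff_of_pos_right hm0]
    push_cast
    linarith
  have hgrid01 : ∀ i : ℕ, i ≤ m → 0 ≤ (i:ℝ)/m ∧ (i:ℝ)/m ≤ 1 := by
    intro i hi
    constructor
    · positivity
    · rw [div_le_one hm0]; exact_mod_cast hi
  set Iν := ∫ t in Set.Icc (0:ℝ) 1, t ^ n ∂SF.measure with hIν
  set T1 := ∑ i ∈ range m, u i * (A (i+1) - A i) with hT1
  set T2 := ∑ i ∈ range m, u i * (B (i+1) - B i) with hT2
  set T3 := ∑ i ∈ range m, u i * (Fk (i+1) - Fk i) with hT3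
  -- Step 1 : |Iν - T1| ≤ μ 0 * n / m
  have hstep1 : |Iν - T1| ≤ μ 0 * n / m := by
    have hAd : ∀ i : ℕ, (SF.measure (Set.Ioc (((i:ℕ):ℝ)/m) (((i+1:ℕ):ℝ)/m))).toReal
        = A (i+1) - A i := by
      intro i
      rw [StieltjesFunction.measure_Ioc, ENNReal.toReal_ofReal]
      exact sub_nonneg.2 (SF.mono (hgrid_mono i))
    have hT1eq : T1 = ∑ i ∈ range m,
        (((i:ℕ):ℝ)/m) ^ n * (SF.measure (Set.Ioc (((i:ℕ):ℝ)/m) (((i+1:ℕ):ℝ)/m))).toReal := by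
      rw [hT1]
      apply Finset.sum_congr rfl
      intro i _
      rw [hAd i]
    have hr := riemann_est SF.measure (n := n) (m := m) hn1 hm1
    rw [← hT1eq] at hr
    have hmle : (SF.measure (Set.Ioc (0:ℝ) 1)).toReal ≤ μ 0 := by
      have hle' : SF.measure (Set.Ioc (0:ℝ) 1) ≤ SF.measure (Set.Icc (0:ℝ) 1) :=
        measure_mono Set.Ioc_subset_Icc_self
      have := ENNReal.toReal_mono (by rw [hmicc]; exact ENNReal.ofReal_ne_top) hle'
      rw [hmtoReal] at this
      exact this
    refine hr.trans ?_
    rw [show μ 0 * (n:ℝ) / m = ((n:ℝ)/m) * μ 0 from by ring]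
    exact mul_le_mul_of_nonneg_left hmle (by positivity)
  -- u facts
  have hu0 : u 0 = 0 := by
    rw [hu]
    simp only [Nat.cast_zero, zero_div]
    exact zero_pow (by omega)
  have hustep : ∀ i ∈ range m, 0 ≤ u (i+1) - u i ∧ u (i+1) - u i ≤ (n:ℝ)/m := by
    intro i hi
    have him : i + 1 ≤ m := by simpa using Finset.mem_range.1 hi
    have h0 := (hgrid01 i (by omega)).1
    have h1 := (hgrid01 (i+1) him).2
    constructor
    · apply sub_nonneg.2
      exact pow_le_pow_left₀ h0 (hgrid_mono i) n
    · have := pow_sub_pow_le_aux n ((i:ℝ)/m) (((i+1:ℕ):ℝ)/m) h0 h1 (hgrid_mono i)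
      have heq : ((i+1:ℕ):ℝ)/m - (i:ℝ)/m = 1/m := by
        push_cast
        field_simp
        ring
      rw [heq] at this
      calc u (i+1) - u i ≤ (n:ℝ) * (1/m) := this
        _ = (n:ℝ)/m := by ring
  -- Step 2 : |T1 - T2| ≤ μ 0 * n / m
  have hstep2 : |T1 - T2| ≤ μ 0 * n / m := by
    set e : ℕ → ℝ := fun i => A i - B i with he
    have hT12 : T1 - T2 = ∑ i ∈ range m, u i * (e (i+1) - e i) := by
      rw [hT1, hT2, ← Finset.sum_sub_distrib]
      apply Finset.sum_congr rfl
      intro i _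
      rw [he]
      ring
    have hem : e m = 0 := by
      rw [he]
      have hxm : ((m:ℕ):ℝ)/m = 1 := div_self hm0.ne'
      simp only [hA, hB]
      rw [hxm, hSF1 1 le_rfl, hG1 1 le_rfl]
      ring
    rw [hT12, abel_sum u e m, hem, hu0, mul_zero, zero_mul, sub_zero, zero_sub, abs_neg]
    have hterm : ∀ i ∈ range m, 0 ≤ (u (i+1) - u i) * e (i+1) ∧
        (u (i+1) - u i) * e (i+1) ≤ ((n:ℝ)/m) * (B (i+2) - B (i+1)) := by
      intro i hi
      have hust := hustep i hi
      have he0 : 0 ≤ e (i+1) := by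
        rw [he]
        exact sub_nonneg.2 (hSFge _)
      have heup : e (i+1) ≤ B (i+2) - B (i+1) := by
        have hsl := hSFle (((i+1:ℕ):ℝ)/m) (((i+2:ℕ):ℝ)/m) (hgrid_lt (i+1))
        simp only [he, hA, hB]
        have : G (((i+2:ℕ):ℝ)/m) = B (i+2) := rfl
        push_cast at hsl ⊢
        linarith
      constructor
      · exact mul_nonneg hust.1 he0
      · calc (u (i+1) - u i) * e (i+1) ≤ ((n:ℝ)/m) * e (i+1) :=
              mul_le_mul_of_nonneg_right hust.2 he0
          _ ≤ ((n:ℝ)/m) * (B (i+2) - B (i+1)) :=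
              mul_le_mul_of_nonneg_left heup (by positivity)
    have habs : |∑ i ∈ range m, (u (i+1) - u i) * e (i+1)|
        = ∑ i ∈ range m, (u (i+1) - u i) * e (i+1) :=
      abs_of_nonneg (Finset.sum_nonneg fun i hi => (hterm i hi).1)
    rw [habs]
    calc ∑ i ∈ range m, (u (i+1) - u i) * e (i+1)
        ≤ ∑ i ∈ range m, ((n:ℝ)/m) * (B (i+2) - B (i+1)) :=
          Finset.sum_le_sum fun i hi => (hterm i hi).2
      _ = ((n:ℝ)/m) * (B (m+1) - B 1) := by
          rw [← Finset.mul_sum, Finset.sum_range_sub (fun i => B (i+1))]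
      _ ≤ ((n:ℝ)/m) * μ 0 := by
          apply mul_le_mul_of_nonneg_left ?_ (by positivity)
          have h1 := (hGmem (((m+1:ℕ):ℝ)/m)).2
          have h2 := (hGmem (((1:ℕ):ℝ)/m)).1
          simp only [hB]
          linarith
      _ = μ 0 * n / m := by ring
  -- Step 3 : |T2 - T3| ≤ ε / 4
  have hstep3 : |T2 - T3| ≤ ε / 4 := by
    have hbnd : |T2 - T3| ≤ (m:ℝ) * (2 * η) := by
      rw [hT2, hT3, ← Finset.sum_sub_distrib]
      refine (Finset.abs_sum_le_sum_abs _ _).trans ?_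
      have : ∀ i ∈ range m, |u i * (B (i+1) - B i) - u i * (Fk (i+1) - Fk i)| ≤ 2 * η := by
        intro i hi
        have him : i < m := Finset.mem_range.1 hi
        have hui : |u i| ≤ 1 := by
          rw [hu, abs_of_nonneg (by positivity)]
          exact pow_le_one₀ (hgrid01 i (by omega)).1 (hgrid01 i (by omega)).2
        have hc1 : |B (i+1) - Fk (i+1)| < η := by
          rw [hB, hFk, abs_sub_comm]
          exact hclose (i+1) (by simp; omega)
        have hc2 : |B i - Fk i| < η := by
          rw [hB, hFk, abs_sub_comm]
          exact hclose i (by simp; omega)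
        calc |u i * (B (i+1) - B i) - u i * (Fk (i+1) - Fk i)|
            = |u i| * |(B (i+1) - Fk (i+1)) - (B i - Fk i)| := by
              rw [← abs_mul]
              congr 1
              ring
          _ ≤ 1 * (|B (i+1) - Fk (i+1)| + |B i - Fk i|) := by
              apply mul_le_mul hui (abs_sub _ _) (abs_nonneg _) zero_le_one
          _ ≤ 2 * η := by linarith
      refine (Finset.sum_le_sum this).trans ?_
      rw [Finset.sum_const, Finset.card_range, nsmul_eq_mul]
    refine hbnd.trans ?_
    rw [hηdef, show (m:ℝ) * (2 * (ε / (8 * ((m:ℝ) + 1)))) = (2 * m * ε) / (8 * ((m:ℝ) + 1)) from by ring,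
      div_le_iff₀ (by positivity)]
    nlinarith
  -- Step 4 : |T3 - hmom μ k n| ≤ μ 0 * n / m
  have hstep4 : |T3 - hmom μ k n| ≤ μ 0 * n / m := by
    have hT3eq : T3 = ∑ i ∈ range m,
        ((i:ℝ)/m) ^ n * (hcdf μ k (((i+1:ℕ):ℝ)/m) - hcdf μ k (((i:ℕ):ℝ)/m)) := rfl
    rw [hT3eq]
    exact hcdf_riemann hpos hk1 hm1 hn1
  -- Step 5
  have hstep5 : |hmom μ k n - μ n| ≤ ε / 4 :=
    (hmom_close hpos hnk).trans (hKbound k hkK)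
  -- assemble
  rw [Real.dist_eq]
  have htri : |μ n - Iν| ≤ |hmom μ k n - μ n| + |T3 - hmom μ k n| + |T2 - T3|
      + |T1 - T2| + |Iν - T1| := by
    have h1 : μ n - Iν = -(hmom μ k n - μ n) - (T3 - hmom μ k n) - (T2 - T3)
        - (T1 - T2) - (Iν - T1) := by ring
    rw [h1]
    calc _ ≤ |(-(hmom μ k n - μ n) - (T3 - hmom μ k n) - (T2 - T3) - (T1 - T2))| + |Iν - T1| :=
          abs_sub _ _
      _ ≤ |(-(hmom μ k n - μ n) - (T3 - hmom μ k n) - (T2 - T3))| + |T1 - T2| + |Iν - T1| := by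
          have := abs_sub (-(hmom μ k n - μ n) - (T3 - hmom μ k n) - (T2 - T3)) (T1 - T2)
          linarith
      _ ≤ |(-(hmom μ k n - μ n) - (T3 - hmom μ k n))| + |T2 - T3| + |T1 - T2| + |Iν - T1| := by
          have := abs_sub (-(hmom μ k n - μ n) - (T3 - hmom μ k n)) (T2 - T3)
          linarith
      _ ≤ |(-(hmom μ k n - μ n))| + |T3 - hmom μ k n| + |T2 - T3| + |T1 - T2| + |Iν - T1| := by
          have := abs_sub (-(hmom μ k n - μ n)) (T3 - hmom μ k n)
          linarith
      _ = |hmom μ k n - μ n| + |T3 - hmom μ k n| + |T2 - T3| + |T1 - T2| + |Iν - T1| := by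
          rw [abs_neg]
  have : |μ n - Iν| ≤ ε / 4 + μ 0 * n / m + ε / 4 + μ 0 * n / m + μ 0 * n / m := by
    linarith
  linarith


/-- Hausdorff's moment theorem: a sequence is completely monotone iff it is the
moment sequence of a finite positive measure on `[0,1]`. -/
theorem hausdorff_moment (μ : ℕ → ℝ) :
    (∀ m n : ℕ, 0 ≤ (fdiff^[m] μ) n) ↔
      ∃ ν : Measure ℝ, IsFiniteMeasure ν ∧ ν (Set.Icc (0 : ℝ) 1)ᶜ = 0 ∧
        ∀ n : ℕ, μ n = ∫ t in Set.Icc (0 : ℝ) 1, t ^ n ∂ν := by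
  constructor
  · exact fun h => hard_dir h
  · rintro ⟨ν, hfin, hnull, hmoments⟩
    exact easy_dir ν hfin hnull hmoments
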